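/- Let T be a triangulation of S with |S| = n, let m ≥ 1 be an integer, and suppose the outerplanar index of T is at least m + 2. Then: (a) there exists an index i with 2 ≤ i ≤ m + 1 such that layer i of T has at most ⌊n/m⌋ vertices; (b) letting i* be the smallest such index, every layer j with 2 ≤ j < i* has at least ⌊n/m⌋ + 1 vertices; and (c) every path in the graph T from a vertex of layer 1 to a vertex of layer index strictly greater than i* passes through a vertex of layer i*, i.e., the vertex set of layer i* separates the outermost layer from all deeper layers. -/

import Mathlib

open scoped Classical

noncomputable section

/-- The plane. -/
abbrev Pt : Type := EuclideanSpace ℝ (Fin 2)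

/-- The closed segment corresponding to an unordered pair of points. -/
def segOf : Sym2 Pt → Set Pt :=
  Sym2.lift ⟨fun p q => segment ℝ p q, fun p q => segment_symm ℝ p q⟩

/-- The union of all segments of an edge set. -/
def graphUnion (E : Set (Sym2 Pt)) : Set Pt := ⋃ e ∈ E, segOf e

/-- A plane straight-line graph on the point set `S`: edges are nondegenerate segments with
endpoints in `S`, and any two distinct segments intersect in at most a common endpoint. -/
def IsPlaneGraph (S : Set Pt) (E : Set (Sym2 Pt)) : Prop :=
  (∀ e ∈ E, ¬ e.IsDiag) ∧
  (∀ e ∈ E, ∀ p ∈ e, p ∈ S) ∧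
  (∀ e ∈ E, ∀ f ∈ E, e ≠ f → segOf e ∩ segOf f ⊆ {p | p ∈ e ∧ p ∈ f})

/-- A triangulation of `S`: a maximal plane straight-line graph on `S`. -/
def IsTriangulation (S : Set Pt) (E : Set (Sym2 Pt)) : Prop :=
  IsPlaneGraph S E ∧
  ∀ p ∈ S, ∀ q ∈ S, p ≠ q → IsPlaneGraph S (insert s(p, q) E) → s(p, q) ∈ E

/-- General position: no three distinct points of `S` are collinear. -/
def GenPos (S : Set Pt) : Prop :=
  ∀ p ∈ S, ∀ q ∈ S, ∀ r ∈ S, p ≠ q → p ≠ r → q ≠ r →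
    ¬ Collinear ℝ ({p, q, r} : Set Pt)

/-- The unbounded face of a plane set `U`: the union of the unbounded connected components
of the complement of `U`. -/
def outerFace (U : Set Pt) : Set Pt :=
  {x | x ∉ U ∧ ¬ Bornology.IsBounded (connectedComponentIn Uᶜ x)}

/-- The vertices of the plane graph `(S, E)` incident to the unbounded face. -/
def outerVerts (S : Set Pt) (E : Set (Sym2 Pt)) : Set Pt :=
  {v ∈ S | v ∈ closure (outerFace (graphUnion E))}

/-- The edges of the plane graph `(S, E)` incident to the unbounded face. -/
def outerEdges (S : Set Pt) (E : Set (Sym2 Pt)) : Set (Sym2 Pt) :=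
  {e ∈ E | segOf e ⊆ closure (outerFace (graphUnion E))}

/-- Remove the outermost (cactus) layer: delete the vertices incident to the unbounded face
together with all edges incident to them. -/
def peel : Set Pt × Set (Sym2 Pt) → Set Pt × Set (Sym2 Pt) :=
  fun G => (G.1 \ outerVerts G.1 G.2, {e ∈ G.2 | ∀ p ∈ e, p ∉ outerVerts G.1 G.2})

/-- The vertices of the `i`-th cactus layer (`i ≥ 1`). -/
def layerVerts (S : Set Pt) (E : Set (Sym2 Pt)) (i : ℕ) : Set Pt :=
  outerVerts (peel^[i - 1] (S, E)).1 (peel^[i - 1] (S, E)).2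

/-- The edges of the `i`-th cactus layer (`i ≥ 1`). -/
def layerEdges (S : Set Pt) (E : Set (Sym2 Pt)) (i : ℕ) : Set (Sym2 Pt) :=
  outerEdges (peel^[i - 1] (S, E)).1 (peel^[i - 1] (S, E)).2

/-- The layer index of a vertex: the (first) layer containing it. -/
def lind (S : Set Pt) (E : Set (Sym2 Pt)) (v : Pt) : ℕ :=
  sInf {i | 1 ≤ i ∧ v ∈ layerVerts S E i}

/-- The outerplanar index: the number of nonempty cactus layers. -/
def outerplanarIndex (S : Set Pt) (E : Set (Sym2 Pt)) : ℕ :=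
  {i : ℕ | 1 ≤ i ∧ (layerVerts S E i).Nonempty}.ncard

/-- Adjacency in the plane graph with edge set `E`. -/
def Adj (E : Set (Sym2 Pt)) (p q : Pt) : Prop := p ≠ q ∧ s(p, q) ∈ E

/-- The abstract simple graph underlying the edge set `E`. -/
def graphOf (E : Set (Sym2 Pt)) : SimpleGraph Pt where
  Adj p q := p ≠ q ∧ s(p, q) ∈ E
  symm := ⟨by
    intro p q h
    exact ⟨h.1.symm, by rw [Sym2.eq_swap]; exact h.2⟩⟩
  loopless := ⟨fun p h => h.1 rfl⟩

end

namespace PLSAux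

variable {S : Set Pt} {E : Set (Sym2 Pt)}

lemma segOf_mk (p q : Pt) : segOf s(p, q) = segment ℝ p q := rfl

lemma isClosed_segOf (e : Sym2 Pt) : IsClosed (segOf e) := by
  induction e using Sym2.ind with
  | _ p q =>
    rw [segOf_mk, segment_eq_image]
    exact (isCompact_Icc.image (by continuity)).isClosed

lemma isClosed_graphUnion {F : Set (Sym2 Pt)} (hF : F.Finite) : IsClosed (graphUnion F) :=
  hF.isClosed_biUnion fun e _ => isClosed_segOf e

lemma finite_E (hfin : S.Finite) (hends : ∀ e ∈ E, ∀ p ∈ e, p ∈ S) : E.Finite := by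
  apply Set.Finite.subset ((hfin.prod hfin).image (Function.uncurry Sym2.mk))
  intro e
  induction e using Sym2.ind with
  | _ p q =>
    intro he
    exact ⟨(p, q), ⟨hends _ he p (by simp), hends _ he q (by simp)⟩, rfl⟩

structure Good (S : Set Pt) (E : Set (Sym2 Pt)) (G : Set Pt × Set (Sym2 Pt)) : Prop where
  vsub : G.1 ⊆ S
  esub : G.2 ⊆ E
  ends : ∀ e ∈ G.2, ∀ p ∈ e, p ∈ G.1

lemma good_peel {G} (h : Good S E G) : Good S E (peel G) where
  vsub := fun v hv => h.vsub hv.1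
  esub := fun e he => h.esub he.1
  ends := fun e he p hp => ⟨h.ends e he.1 p hp, he.2 p hp⟩

lemma good_iter (hends : ∀ e ∈ E, ∀ p ∈ e, p ∈ S) (i : ℕ) :
    Good S E (peel^[i] (S, E)) := by
  induction i with
  | zero => exact ⟨Set.Subset.rfl, Set.Subset.rfl, hends⟩
  | succ i ih => rw [Function.iterate_succ_apply']; exact good_peel ih

lemma iter_fst_succ (P : Set Pt × Set (Sym2 Pt)) (k : ℕ) :
    (peel^[k+1] P).1 = (peel^[k] P).1 \ outerVerts (peel^[k] P).1 (peel^[k] P).2 := by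
  rw [Function.iterate_succ_apply']; rfl

lemma layerVerts_succ (k : ℕ) :
    layerVerts S E (k+1) = outerVerts (peel^[k] (S,E)).1 (peel^[k] (S,E)).2 := rfl

end PLSAux

namespace PLSAux

lemma mem_outerFace_of_norm {F : Set (Sym2 Pt)} {R : ℝ} (hR : 0 ≤ R)
    (hsub : graphUnion F ⊆ Metric.closedBall 0 R) {x : Pt} (hx : R < ‖x‖) :
    x ∈ outerFace (graphUnion F) := by
  have hx0 : 0 < ‖x‖ := lt_of_le_of_lt hR hx
  have hnot : ∀ c : ℝ, 1 ≤ c → c • x ∉ graphUnion F := by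
    intro c hc hmem
    have h := hsub hmem
    rw [Metric.mem_closedBall, dist_zero_right, norm_smul, Real.norm_eq_abs] at h
    have hc' : (1:ℝ) ≤ |c| := le_trans hc (le_abs_self c)
    nlinarith [norm_nonneg x]
  set ray : Set Pt := (fun c : ℝ => c • x) '' Set.Ici 1 with hray
  have hxray : x ∈ ray := ⟨1, Set.self_mem_Ici, one_smul ℝ x⟩
  have hraysub : ray ⊆ (graphUnion F)ᶜ := by
    rintro z ⟨c, hc, rfl⟩
    exact hnot c hc
  have hconn : IsPreconnected ray :=
    isPreconnected_Ici.image _ (continuous_id.smul continuous_const).continuousOn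
  refine ⟨by simpa using hnot 1 le_rfl, fun hb => ?_⟩
  have hsub2 : ray ⊆ connectedComponentIn (graphUnion F)ᶜ x :=
    hconn.subset_connectedComponentIn hxray hraysub
  obtain ⟨C, hC⟩ := isBounded_iff_forall_norm_le.mp (hb.subset hsub2)
  set c : ℝ := max 1 ((C + 1) / ‖x‖) with hcdef
  have hc1 : (1:ℝ) ≤ c := le_max_left _ _
  have := hC (c • x) ⟨c, hc1, rfl⟩
  rw [norm_smul, Real.norm_eq_abs, abs_of_nonneg (le_trans zero_le_one hc1)] at this
  have h2 : (C + 1) / ‖x‖ ≤ c := le_max_right _ _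
  rw [div_le_iff₀ hx0] at h2
  linarith

lemma outerVerts_nonempty {V : Set Pt} {F : Set (Sym2 Pt)} (hVfin : V.Finite) (hV : V.Nonempty)
    (hends : ∀ e ∈ F, ∀ p ∈ e, p ∈ V) : (outerVerts V F).Nonempty := by
  obtain ⟨v, hvV, hmax⟩ := Set.exists_max_image V (fun u => ‖u‖) hVfin hV
  have hsub : graphUnion F ⊆ Metric.closedBall 0 ‖v‖ := by
    intro z hz
    rw [graphUnion, Set.mem_iUnion₂] at hz
    obtain ⟨e, he, hze⟩ := hz
    obtain ⟨⟨p, q⟩, rfl⟩ := Quot.exists_rep e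
    have hp : p ∈ V := hends _ he p (by exact Sym2.mem_mk_left p q)
    have hq : q ∈ V := hends _ he q (by exact Sym2.mem_mk_right p q)
    have : segment ℝ p q ⊆ Metric.closedBall 0 ‖v‖ :=
      (convex_closedBall (0:Pt) ‖v‖).segment_subset
        (by rw [Metric.mem_closedBall, dist_zero_right]; exact hmax p hp)
        (by rw [Metric.mem_closedBall, dist_zero_right]; exact hmax q hq)
    exact this hze
  refine ⟨v, hvV, ?_⟩
  rw [Metric.mem_closure_iff]
  intro ε hε
  by_cases hv0 : v = 0
  · refine ⟨(ε/2) • (EuclideanSpace.single (0 : Fin 2) (1:ℝ)), ?_, ?_⟩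
    · apply mem_outerFace_of_norm (norm_nonneg v) hsub
      rw [norm_smul, EuclideanSpace.norm_single, norm_one, mul_one, Real.norm_eq_abs,
        abs_of_pos (show (0:ℝ) < ε/2 by linarith), hv0, norm_zero]
      linarith
    · rw [hv0, dist_zero_left, norm_smul, EuclideanSpace.norm_single, norm_one, mul_one,
        Real.norm_eq_abs, abs_of_pos (show (0:ℝ) < ε/2 by linarith)]
      linarith
  · have hvpos : 0 < ‖v‖ := norm_pos_iff.mpr hv0
    set δ : ℝ := ε / (2 * ‖v‖) with hδdef
    have hδpos : 0 < δ := by positivity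
    refine ⟨(1 + δ) • v, ?_, ?_⟩
    · apply mem_outerFace_of_norm (norm_nonneg v) hsub
      rw [norm_smul, Real.norm_eq_abs, abs_of_pos (by linarith : (0:ℝ) < 1 + δ)]
      nlinarith
    · have hvv : v - (1 + δ) • v = (-δ) • v := by module
      rw [dist_eq_norm, hvv, norm_smul, Real.norm_eq_abs, abs_neg, abs_of_pos hδpos]
      have hcalc : δ * ‖v‖ = ε / 2 := by
        rw [hδdef]; field_simp
      rw [hcalc]; linarith

end PLSAux

namespace PLSAux

variable {S : Set Pt} {E : Set (Sym2 Pt)}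

lemma exists_layer (hfin : S.Finite) (hends : ∀ e ∈ E, ∀ p ∈ e, p ∈ S)
    {v : Pt} (hv : v ∈ S) : ∃ k, v ∈ layerVerts S E (k+1) := by
  by_contra h
  push_neg at h
  have key : ∀ k, v ∈ (peel^[k] (S,E)).1 ∧ (peel^[k] (S,E)).1.ncard + k ≤ S.ncard := by
    intro k
    induction k with
    | zero => exact ⟨hv, by simp⟩
    | succ k ih =>
      obtain ⟨hvk, hck⟩ := ih
      have hg := good_iter hends k
      have hVfin : (peel^[k] (S,E)).1.Finite := hfin.subset hg.vsub
      obtain ⟨w, hw⟩ := outerVerts_nonempty hVfin ⟨v, hvk⟩ hg.ends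
      have hvnot : v ∉ outerVerts (peel^[k] (S,E)).1 (peel^[k] (S,E)).2 := h k
      have hss : (peel^[k+1] (S,E)).1 ⊂ (peel^[k] (S,E)).1 := by
        rw [iter_fst_succ]
        exact ⟨Set.diff_subset, fun hsub => (hsub hw.1).2 hw⟩
      have hlt := Set.ncard_lt_ncard hss hVfin
      exact ⟨by rw [iter_fst_succ]; exact ⟨hvk, hvnot⟩, by omega⟩
  have h1 := (key (S.ncard + 1)).2
  have h2 : 0 < (peel^[S.ncard+1] (S,E)).1.ncard :=
    Set.ncard_pos (hfin.subset (good_iter hends _).vsub) |>.mpr ⟨v, (key _).1⟩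
  omega

lemma lind_set_nonempty (hfin : S.Finite) (hends : ∀ e ∈ E, ∀ p ∈ e, p ∈ S)
    {v : Pt} (hv : v ∈ S) : {i | 1 ≤ i ∧ v ∈ layerVerts S E i}.Nonempty := by
  obtain ⟨k, hk⟩ := exists_layer hfin hends hv
  exact ⟨k+1, by omega, hk⟩

lemma lind_mem (hfin : S.Finite) (hends : ∀ e ∈ E, ∀ p ∈ e, p ∈ S)
    {v : Pt} (hv : v ∈ S) :
    1 ≤ lind S E v ∧ v ∈ layerVerts S E (lind S E v) :=
  Nat.sInf_mem (lind_set_nonempty hfin hends hv)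

lemma lind_le {v : Pt} {i : ℕ} (h1 : 1 ≤ i) (h : v ∈ layerVerts S E i) :
    lind S E v ≤ i := Nat.sInf_le ⟨h1, h⟩

lemma mem_iter {v : Pt} (hv : v ∈ S) :
    ∀ i, (∀ k, k < i → v ∉ layerVerts S E (k+1)) → v ∈ (peel^[i] (S,E)).1 := by
  intro i
  induction i with
  | zero => exact fun _ => hv
  | succ i ih =>
    intro h
    rw [iter_fst_succ]
    exact ⟨ih (fun k hk => h k (by omega)), h i (by omega)⟩

lemma edge_iter {p q : Pt} (he : s(p,q) ∈ E) :
    ∀ i, (∀ k, k < i → p ∉ layerVerts S E (k+1)) →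
      (∀ k, k < i → q ∉ layerVerts S E (k+1)) → s(p,q) ∈ (peel^[i] (S,E)).2 := by
  intro i
  induction i with
  | zero => exact fun _ _ => he
  | succ i ih =>
    intro hp hq
    rw [Function.iterate_succ_apply']
    refine ⟨ih (fun k hk => hp k (by omega)) (fun k hk => hq k (by omega)), ?_⟩
    intro x hx
    rcases Sym2.mem_iff.mp hx with rfl | rfl
    · exact hp i (by omega)
    · exact hq i (by omega)

lemma iter_fst_mono : ∀ i j : ℕ, i ≤ j → (peel^[j] (S,E)).1 ⊆ (peel^[i] (S,E)).1 := by
  intro i j hij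
  induction j, hij using Nat.le_induction with
  | base => exact Set.Subset.rfl
  | succ j hij ih =>
    refine Set.Subset.trans ?_ ih
    rw [iter_fst_succ]
    exact Set.diff_subset

lemma layers_disjoint {i j : ℕ} (h1 : 1 ≤ i) (hij : i < j) :
    Disjoint (layerVerts S E i) (layerVerts S E j) := by
  rw [Set.disjoint_left]
  intro v hvi hvj
  have hvj' : v ∈ (peel^[j-1] (S,E)).1 := hvj.1
  have hvIi : v ∈ (peel^[i] (S,E)).1 := iter_fst_mono i (j-1) (by omega) hvj'
  obtain ⟨k, rfl⟩ : ∃ k, i = k + 1 := ⟨i-1, by omega⟩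
  rw [iter_fst_succ] at hvIi
  exact hvIi.2 hvi

end PLSAux

namespace PLSAux

variable {S : Set Pt} {E : Set (Sym2 Pt)}

lemma lind_adj (hfin : S.Finite) (hpg : IsPlaneGraph S E) {p q : Pt} (hne : p ≠ q)
    (he : s(p,q) ∈ E) : lind S E q ≤ lind S E p + 1 := by
  have hends := hpg.2.1
  have hp : p ∈ S := hends _ he p (Sym2.mem_mk_left p q)
  have hq : q ∈ S := hends _ he q (Sym2.mem_mk_right p q)
  by_contra hgt
  push_neg at hgt
  obtain ⟨hl1, hpl⟩ := lind_mem hfin hends hp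
  obtain ⟨k, hk⟩ : ∃ k, lind S E p = k + 1 := ⟨lind S E p - 1, by omega⟩
  have hpnot : ∀ j, j < k → p ∉ layerVerts S E (j+1) := by
    intro j hj hmem
    have := lind_le (by omega) hmem
    omega
  have hqnot : ∀ j, j < k + 2 → q ∉ layerVerts S E (j+1) := by
    intro j hj hmem
    have := lind_le (by omega) hmem
    omega
  have hgood := good_iter hends k
  have hgood' := good_iter hends (k+1)
  have heF : s(p,q) ∈ (peel^[k] (S,E)).2 :=
    edge_iter he k (fun j hj => hpnot j hj) (fun j hj => hqnot j (by omega))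
  have hpO : p ∈ outerVerts (peel^[k] (S,E)).1 (peel^[k] (S,E)).2 := by
    rw [hk] at hpl; exact hpl
  have hqV : q ∈ (peel^[k+1] (S,E)).1 := mem_iter hq (k+1) (fun j hj => hqnot j (by omega))
  have hF'sub : ∀ f ∈ (peel^[k+1] (S,E)).2,
      f ∈ (peel^[k] (S,E)).2 ∧ ∀ x ∈ f, x ∉ outerVerts (peel^[k] (S,E)).1 (peel^[k] (S,E)).2 := by
    intro f hf
    rw [Function.iterate_succ_apply'] at hf
    exact hf
  set K : Set Pt := graphUnion (peel^[k+1] (S,E)).2 with hKdef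
  have hKfin : ((peel^[k+1] (S,E)).2).Finite := (finite_E hfin hends).subset hgood'.esub
  have hKclosed : IsClosed K := isClosed_graphUnion hKfin
  -- any point of `segOf s(p,q)` other than `q` that lies in `K` gives a contradiction
  have hfne : ∀ f ∈ (peel^[k+1] (S,E)).2, f ≠ s(p,q) := by
    intro f hf hfeq
    exact (hF'sub f hf).2 p (hfeq ▸ Sym2.mem_mk_left p q) hpO
  have hmemK : ∀ z, z ∈ K → z ∈ segOf s(p,q) → z ∈ s(p,q) := by
    intro z hzK hzseg
    rw [hKdef, graphUnion, Set.mem_iUnion₂] at hzK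
    obtain ⟨f, hf, hzf⟩ := hzK
    exact (hpg.2.2 _ he f (hgood'.esub hf) (Ne.symm (hfne f hf)) ⟨hzseg, hzf⟩).1
  have hpK : p ∉ K := by
    intro hpK
    have := hmemK p hpK (left_mem_segment ℝ p q)
    -- p ∈ s(p,q); but get the edge f containing p with all its points not outer
    rw [hKdef, graphUnion, Set.mem_iUnion₂] at hpK
    obtain ⟨f, hf, hpf⟩ := hpK
    have hpf' : p ∈ f :=
      (hpg.2.2 _ he f (hgood'.esub hf) (Ne.symm (hfne f hf)) ⟨left_mem_segment ℝ p q, hpf⟩).2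
    exact (hF'sub f hf).2 p hpf' hpO
  -- interior points of the segment avoid K
  have hsegK : ∀ t : ℝ, t ∈ Set.Ioo (0:ℝ) 1 → ((1-t) • p + t • q) ∉ K := by
    intro t ht hzK
    have hzseg : ((1-t) • p + t • q) ∈ segOf s(p,q) := by
      rw [segOf_mk, segment_eq_image]
      exact ⟨t, ⟨ht.1.le, ht.2.le⟩, rfl⟩
    rcases Sym2.mem_iff.mp (hmemK _ hzK hzseg) with hzp | hzq
    · apply hne
      have h0 : t • q = t • p := by
        have := hzp
        have h1 : (1-t) • p + t • q = (1-t) • p + t • p := by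
          rw [this]; module
        exact add_left_cancel h1
      exact (smul_right_injective Pt (ne_of_gt ht.1) h0).symm ▸ rfl
    · apply hne
      have h0 : (1-t) • p = (1-t) • q := by
        have h1 : (1-t) • p + t • q = (1-t) • q + t • q := by
          rw [hzq]; module
        exact add_right_cancel h1
      exact smul_right_injective Pt (by linarith [ht.2] : (1:ℝ) - t ≠ 0) h0
  -- a ball around p avoiding K
  obtain ⟨r, hr0, hball⟩ : ∃ r > 0, Metric.ball p r ⊆ Kᶜ := by
    rcases Metric.isOpen_iff.mp hKclosed.isOpen_compl p hpK with ⟨r, hr, hsub⟩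
    exact ⟨r, hr, hsub⟩
  -- a nearby point of the outer face of the previous layer's graph
  obtain ⟨y, hyO, hpy⟩ := Metric.mem_closure_iff.mp hpO.2 r hr0
  have hKsubF : K ⊆ graphUnion (peel^[k] (S,E)).2 := by
    intro z hz
    rw [hKdef, graphUnion, Set.mem_iUnion₂] at hz
    obtain ⟨f, hf, hzf⟩ := hz
    exact Set.mem_iUnion₂.mpr ⟨f, (hF'sub f hf).1, hzf⟩
  have hycomp : ¬ Bornology.IsBounded (connectedComponentIn Kᶜ y) := fun hb =>
    hyO.2 (hb.subset (connectedComponentIn_mono y (Set.compl_subset_compl.mpr hKsubF)))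
  have hyK : y ∉ K := fun h => hyO.1 (hKsubF h)
  -- the connected set: ball ∪ open segment
  have hD : (0:ℝ) < ‖q - p‖ := by
    rw [norm_pos_iff, sub_ne_zero]
    exact Ne.symm hne
  set seg : Set Pt := (fun t : ℝ => (1-t) • p + t • q) '' Set.Ioo 0 1 with hsegdef
  have hsegC : seg = openSegment ℝ p q := (openSegment_eq_image ℝ p q).symm
  have hsegK' : seg ⊆ Kᶜ := by
    rintro z ⟨t, ht, rfl⟩
    exact hsegK t ht
  have hdiff : ∀ t : ℝ, ((1-t) • p + t • q) - p = t • (q - p) := by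
    intro t; module
  set t₀ : ℝ := min (1/2) (r / (2 * ‖q - p‖)) with ht₀def
  have ht₀Ioo : t₀ ∈ Set.Ioo (0:ℝ) 1 := by
    constructor
    · apply lt_min (by norm_num)
      positivity
    · exact lt_of_le_of_lt (min_le_left _ _) (by norm_num)
  have hz₀ball : ((1-t₀) • p + t₀ • q) ∈ Metric.ball p r := by
    rw [Metric.mem_ball, dist_eq_norm, hdiff, norm_smul, Real.norm_eq_abs,
      abs_of_pos ht₀Ioo.1]
    have h1 : t₀ ≤ r / (2 * ‖q - p‖) := min_le_right _ _
    have heq : (r / (2 * ‖q - p‖)) * ‖q - p‖ = r / 2 := by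
      field_simp
    have h2 : t₀ * ‖q - p‖ ≤ r / 2 := by
      nlinarith
    linarith
  set C : Set Pt := Metric.ball p r ∪ seg with hCdef
  have hCconn : IsPreconnected C :=
    IsPreconnected.union ((1-t₀) • p + t₀ • q) hz₀ball ⟨t₀, ht₀Ioo, rfl⟩
      (convex_ball p r).isPreconnected (hsegC ▸ (convex_openSegment (𝕜 := ℝ) p q).isPreconnected)
  have hCsub : C ⊆ Kᶜ := Set.union_subset hball hsegK'
  have hyC : y ∈ C := Or.inl (by rw [Metric.mem_ball, dist_comm]; exact hpy)
  have hCcomp : C ⊆ connectedComponentIn Kᶜ y :=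
    hCconn.subset_connectedComponentIn hyC hCsub
  have hsegOF : ∀ z ∈ seg, z ∈ outerFace K := by
    intro z hz
    refine ⟨fun h => hsegK' hz h, fun hb => ?_⟩
    have hzc : z ∈ connectedComponentIn Kᶜ y := hCcomp (Or.inr hz)
    rw [connectedComponentIn_eq hzc] at hycomp
    exact hycomp hb
  -- q is in the closure of the outer face of K
  have hqcl : q ∈ closure (outerFace K) := by
    rw [Metric.mem_closure_iff]
    intro ε hε
    set t₁ : ℝ := max (1/2) (1 - ε / (2 * ‖q - p‖)) with ht₁def
    have ht₁Ioo : t₁ ∈ Set.Ioo (0:ℝ) 1 := by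
      constructor
      · exact lt_of_lt_of_le (by norm_num) (le_max_left _ _)
      · apply max_lt (by norm_num)
        have : 0 < ε / (2 * ‖q - p‖) := by positivity
        linarith
    refine ⟨(1-t₁) • p + t₁ • q, hsegOF _ ⟨t₁, ht₁Ioo, rfl⟩, ?_⟩
    have hqz : q - ((1-t₁) • p + t₁ • q) = (1-t₁) • (q - p) := by module
    rw [dist_eq_norm, hqz, norm_smul, Real.norm_eq_abs,
      abs_of_pos (by linarith [ht₁Ioo.2] : (0:ℝ) < 1 - t₁)]
    have h1 : 1 - ε / (2 * ‖q - p‖) ≤ t₁ := le_max_right _ _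
    have h2 : 1 - t₁ ≤ ε / (2 * ‖q - p‖) := by linarith
    have heq : (ε / (2 * ‖q - p‖)) * ‖q - p‖ = ε / 2 := by
      field_simp
    have h3 : (1 - t₁) * ‖q - p‖ ≤ ε / 2 := by
      nlinarith
    linarith
  -- hence q is in layer k+2
  have hqO : q ∈ layerVerts S E (k+2) := ⟨hqV, hqcl⟩
  have := lind_le (by omega) hqO
  omega

end PLSAux

namespace PLSAux

variable {S : Set Pt} {E : Set (Sym2 Pt)}

lemma walk_ivt (hstep : ∀ u v : Pt, (graphOf E).Adj u v → lind S E v ≤ lind S E u + 1)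
    {a b : Pt} (w : (graphOf E).Walk a b) :
    ∀ k, lind S E a ≤ k → k < lind S E b → ∃ x ∈ w.support, lind S E x = k := by
  induction w with
  | nil => intro k h1 h2; omega
  | @cons u v b' h p ih =>
    intro k h1 h2
    by_cases hc : lind S E v ≤ k
    · obtain ⟨x, hx, hxk⟩ := ih k hc h2
      exact ⟨x, by rw [SimpleGraph.Walk.support_cons]; exact List.mem_cons_of_mem _ hx, hxk⟩
    · have hs := hstep u v h
      exact ⟨u, SimpleGraph.Walk.start_mem_support _, by omega⟩

end PLSAux

/-- existence of a small peripheral layer, minimality of the first small layer,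
and the separation property of that layer. -/
theorem peripheral_layer_separation
    (S : Set Pt) (hfin : S.Finite) (hgp : GenPos S)
    (E : Set (Sym2 Pt)) (hT : IsTriangulation S E)
    (m : ℕ) (hm : 1 ≤ m) (hop : m + 2 ≤ outerplanarIndex S E) :
    (∃ i : ℕ, 2 ≤ i ∧ i ≤ m + 1 ∧ (layerVerts S E i).ncard ≤ S.ncard / m) ∧
    (∀ j : ℕ, 2 ≤ j →
        j < sInf {i | 2 ≤ i ∧ i ≤ m + 1 ∧ (layerVerts S E i).ncard ≤ S.ncard / m} →
        S.ncard / m + 1 ≤ (layerVerts S E j).ncard) ∧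
    (∀ a b : Pt, ∀ w : (graphOf E).Walk a b,
        a ∈ layerVerts S E 1 →
        sInf {i | 2 ≤ i ∧ i ≤ m + 1 ∧ (layerVerts S E i).ncard ≤ S.ncard / m} < lind S E b →
        ∃ x ∈ w.support,
          x ∈ layerVerts S E
            (sInf {i | 2 ≤ i ∧ i ≤ m + 1 ∧ (layerVerts S E i).ncard ≤ S.ncard / m})) := by
  classical
  have hpg := hT.1
  have hends := hpg.2.1
  have hA : ∃ i, 2 ≤ i ∧ i ≤ m + 1 ∧ (layerVerts S E i).ncard ≤ S.ncard / m := by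
    by_contra hno
    push_neg at hno
    have hlsub : ∀ i : ℕ, layerVerts S E i ⊆ S := fun i v hv =>
      (PLSAux.good_iter hends (i-1)).vsub hv.1
    set t : ℕ → Finset Pt := fun i => (hfin.subset (hlsub i)).toFinset with ht
    have hcard : ∀ i, (t i).card = (layerVerts S E i).ncard := fun i =>
      (Set.ncard_eq_toFinset_card _ (hfin.subset (hlsub i))).symm
    have hdisjF : ∀ i ∈ Finset.Icc 2 (m+1), ∀ j ∈ Finset.Icc 2 (m+1), i ≠ j →
        Disjoint (t i) (t j) := by
      intro i hi j hj hij
      rw [ht]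
      simp only [Set.Finite.disjoint_toFinset]
      rw [Finset.mem_Icc] at hi hj
      rcases lt_or_gt_of_ne hij with h | h
      · exact PLSAux.layers_disjoint (by omega) h
      · exact (PLSAux.layers_disjoint (by omega) h).symm
    have hsum : ∑ i ∈ Finset.Icc 2 (m+1), (t i).card ≤ S.ncard := by
      rw [← Finset.card_biUnion hdisjF]
      have hsub2 : (Finset.Icc 2 (m+1)).biUnion t ⊆ hfin.toFinset := by
        intro v hv
        rw [Finset.mem_biUnion] at hv
        obtain ⟨i, _, hvi⟩ := hv
        rw [ht, Set.Finite.mem_toFinset] at hvi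
        rw [Set.Finite.mem_toFinset]
        exact hlsub i hvi
      calc ((Finset.Icc 2 (m+1)).biUnion t).card ≤ hfin.toFinset.card :=
            Finset.card_le_card hsub2
        _ = S.ncard := (Set.ncard_eq_toFinset_card _ hfin).symm
    have hlb : ∀ i ∈ Finset.Icc 2 (m+1), S.ncard / m + 1 ≤ (t i).card := by
      intro i hi
      rw [Finset.mem_Icc] at hi
      have := hno i hi.1 hi.2
      rw [hcard]
      omega
    have htot := Finset.card_nsmul_le_sum _ _ _ hlb
    rw [Nat.card_Icc, smul_eq_mul] at htot
    have hmm : m + 1 + 1 - 2 = m := by omega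
    rw [hmm] at htot
    have hm2 : m * (S.ncard / m + 1) ≤ S.ncard := le_trans htot hsum
    rw [Nat.mul_add, Nat.mul_one] at hm2
    obtain ⟨c, d, h1, h2, h3⟩ : ∃ c d, c + d = S.ncard ∧ d < m ∧ c + m ≤ S.ncard :=
      ⟨m * (S.ncard / m), S.ncard % m, Nat.div_add_mod S.ncard m,
        Nat.mod_lt _ (by omega), hm2⟩
    omega
  set istar := sInf {i | 2 ≤ i ∧ i ≤ m + 1 ∧ (layerVerts S E i).ncard ≤ S.ncard / m}
    with histar
  have hImem : istar ∈ {i | 2 ≤ i ∧ i ≤ m + 1 ∧ (layerVerts S E i).ncard ≤ S.ncard / m} :=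
    Nat.sInf_mem hA
  refine ⟨hA, ?_, ?_⟩
  · intro j hj2 hjlt
    have hjA : j ∉ {i | 2 ≤ i ∧ i ≤ m + 1 ∧ (layerVerts S E i).ncard ≤ S.ncard / m} :=
      Nat.notMem_of_lt_sInf (histar ▸ hjlt)
    have hile : istar ≤ m + 1 := hImem.2.1
    have hcc : ¬ ((layerVerts S E j).ncard ≤ S.ncard / m) := by
      intro hc
      exact hjA ⟨hj2, by omega, hc⟩
    omega
  · intro a b w ha hb
    have hstep : ∀ u v : Pt, (graphOf E).Adj u v → lind S E v ≤ lind S E u + 1 := by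
      intro u v huv
      exact PLSAux.lind_adj hfin hpg huv.1 huv.2
    have haS : a ∈ S := ha.1
    have hla : lind S E a = 1 := le_antisymm (PLSAux.lind_le le_rfl ha)
      (PLSAux.lind_mem hfin hends haS).1
    have h2i : 2 ≤ istar := hImem.1
    obtain ⟨x, hxw, hxl⟩ := PLSAux.walk_ivt hstep w istar (by omega) hb
    refine ⟨x, hxw, ?_⟩
    have hne2 : {i | 1 ≤ i ∧ x ∈ layerVerts S E i}.Nonempty := by
      by_contra hemp
      rw [Set.not_nonempty_iff_eq_empty] at hemp
      have h0 : lind S E x = 0 := by rw [lind, hemp, Nat.sInf_empty]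
      omega
    have hmem2 := Nat.sInf_mem hne2
    rw [show sInf {i | 1 ≤ i ∧ x ∈ layerVerts S E i} = lind S E x from rfl, hxl] at hmem2
    exact hmem2.2
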